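/- arXiv:math/0406006 — 8 statements merged into one kernel-verified Lean document; each statement's English description precedes it below -/
import Mathlib

section
/- Let R be a commutative ring and let (r_j)_{j≥1} and (s_j)_{j≥1} be sequences in R. Define the persistent-root polynomial sequences q_n(x) = ∏_{j=1}^{n}(x − r_j) and p_n(x) = ∏_{j=1}^{n}(x − s_j) (with p_0 = q_0 = 1), and let L_{n,k} ∈ R be the (unique) connection coefficients with p_n(x) = Σ_{k=0}^{n} L_{n,k} q_k(x) (setting L_{n,k} = 0 for k < 0 or k > n). Then for all n, k ≥ 0: L_{n+1,k} = L_{n,k−1} + (r_{k+1} − s_{n+1}) L_{n,k}. -/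
open Polynomial Finset

private lemma lah_aux_monic {R : Type*} [CommRing R] (r : ℕ → R) (k : ℕ) :
    (∏ j ∈ Finset.range k, (X - C (r (j + 1)))).Monic :=
  monic_prod_of_monic _ _ fun _ _ => monic_X_sub_C _

private lemma lah_aux_natDegree {R : Type*} [CommRing R] [Nontrivial R] (r : ℕ → R) (k : ℕ) :
    (∏ j ∈ Finset.range k, (X - C (r (j + 1)))).natDegree = k := by
  rw [natDegree_prod_of_monic _ _ fun _ _ => monic_X_sub_C _]
  simp

private lemma lah_aux_indep {R : Type*} [CommRing R] (r : ℕ → R) :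
    ∀ (m : ℕ) (a : ℕ → R),
      (∑ k ∈ Finset.range m, C (a k) * ∏ j ∈ Finset.range k, (X - C (r (j + 1)))) = 0 →
      ∀ k < m, a k = 0 := by
  nontriviality R
  intro m
  induction m with
  | zero => intro a _ k hk; omega
  | succ m ih =>
    intro a h k hk
    have hm : a m = 0 := by
      have := congrArg (fun p => Polynomial.coeff p m) h
      simp only [finset_sum_coeff, coeff_zero] at this
      rw [Finset.sum_range_succ] at this
      have hlt : ∀ i ∈ Finset.range m,
          (C (a i) * ∏ j ∈ Finset.range i, (X - C (r (j + 1)))).coeff m = 0 := by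
        intro i hi
        apply coeff_eq_zero_of_natDegree_lt
        calc (C (a i) * ∏ j ∈ Finset.range i, (X - C (r (j + 1)))).natDegree
            ≤ (C (a i)).natDegree
                + (∏ j ∈ Finset.range i, (X - C (r (j + 1)))).natDegree :=
              natDegree_mul_le
          _ < m := by
              simp only [natDegree_C, zero_add, lah_aux_natDegree]
              exact Finset.mem_range.mp hi
      have hcoeff : (∏ j ∈ Finset.range m, (X - C (r (j + 1)))).coeff m = 1 := by
        have h2 := (lah_aux_monic r m).coeff_natDegree
        rwa [lah_aux_natDegree] at h2
      rw [Finset.sum_eq_zero hlt, zero_add, coeff_C_mul, hcoeff, mul_one] at this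
      exact this
    rcases Nat.lt_succ_iff_lt_or_eq.mp hk with h' | h'
    · apply ih a _ k h'
      rw [Finset.sum_range_succ, hm] at h
      simpa using h
    · rwa [h']

/-- recurrence for the generalized Lah numbers (connection
coefficients between two persistent-root polynomial sequences):
`L_{n+1,k} = L_{n,k-1} + (r_{k+1} - s_{n+1}) L_{n,k}`. -/
theorem generalized_lah_recurrence (R : Type*) [CommRing R]
    (r s : ℕ → R) (L : ℕ → ℤ → R)
    (hLzero : ∀ (n : ℕ) (k : ℤ), (k < 0 ∨ (n : ℤ) < k) → L n k = 0)
    (hLexp : ∀ n : ℕ,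
      (∏ j ∈ Finset.range n, (X - C (s (j + 1)))) =
        ∑ k ∈ Finset.range (n + 1),
          C (L n (k : ℤ)) * ∏ j ∈ Finset.range k, (X - C (r (j + 1)))) :
    ∀ n k : ℕ,
      L (n + 1) (k : ℤ) =
        L n ((k : ℤ) - 1) + (r (k + 1) - s (n + 1)) * L n (k : ℤ) := by
  intro n k
  set q : ℕ → R[X] := fun k => ∏ j ∈ Finset.range k, (X - C (r (j + 1))) with hq
  set a : ℕ → R := fun k =>
    L (n + 1) (k : ℤ) - (L n ((k : ℤ) - 1) + (r (k + 1) - s (n + 1)) * L n (k : ℤ)) with ha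
  by_cases hk : k < n + 2
  · -- main case: use uniqueness of expansion
    have key : (∑ k ∈ Finset.range (n + 2), C (a k) * q k) = 0 := by
      have h1 : (∑ k ∈ Finset.range (n + 2), C (L (n + 1) (k : ℤ)) * q k)
          = (∑ k ∈ Finset.range (n + 1), C (L n (k : ℤ)) * q k) * (X - C (s (n + 1))) := by
        rw [← hLexp (n + 1), ← hLexp n, Finset.prod_range_succ]
      have h2 : (∑ k ∈ Finset.range (n + 1), C (L n (k : ℤ)) * q k) * (X - C (s (n + 1)))
          = ∑ k ∈ Finset.range (n + 2),
              (C (L n ((k : ℤ) - 1)) + C ((r (k + 1) - s (n + 1)) * L n (k : ℤ))) * q k := by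
        rw [Finset.sum_mul]
        have step : ∀ k : ℕ, C (L n (k : ℤ)) * q k * (X - C (s (n + 1)))
            = C (L n (((k : ℕ) + 1 : ℤ) - 1)) * q (k + 1)
              + C ((r (k + 1) - s (n + 1)) * L n (k : ℤ)) * q k := by
          intro k
          have hq1 : q (k + 1) = q k * (X - C (r (k + 1))) := by
            simp [hq, Finset.prod_range_succ]
          rw [hq1]
          simp only [add_sub_cancel_right, C_mul, C_sub]
          ring
        calc ∑ k ∈ Finset.range (n + 1), C (L n (k : ℤ)) * q k * (X - C (s (n + 1)))
            = ∑ k ∈ Finset.range (n + 1),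
                (C (L n (((k : ℕ) + 1 : ℤ) - 1)) * q (k + 1)
                  + C ((r (k + 1) - s (n + 1)) * L n (k : ℤ)) * q k) := by
              exact Finset.sum_congr rfl fun k _ => step k
          _ = (∑ k ∈ Finset.range (n + 1), C (L n (((k : ℕ) + 1 : ℤ) - 1)) * q (k + 1))
              + ∑ k ∈ Finset.range (n + 1), C ((r (k + 1) - s (n + 1)) * L n (k : ℤ)) * q k := by
              rw [Finset.sum_add_distrib]
          _ = (∑ k ∈ Finset.range (n + 2), C (L n ((k : ℤ) - 1)) * q k)
              + ∑ k ∈ Finset.range (n + 2), C ((r (k + 1) - s (n + 1)) * L n (k : ℤ)) * q k := by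
              congr 1
              · rw [Finset.sum_range_succ' (fun k => C (L n ((k : ℤ) - 1)) * q k) (n + 1)]
                have h0 : L n (((0 : ℕ) : ℤ) - 1) = 0 := hLzero n _ (by norm_num)
                rw [h0]
                simp
              · rw [Finset.sum_range_succ
                  (fun k => C ((r (k + 1) - s (n + 1)) * L n (k : ℤ)) * q k) (n + 1)]
                have h0 : L n (((n + 1 : ℕ) : ℤ)) = 0 := by
                  apply hLzero; right; omega
                rw [h0]
                simp
          _ = ∑ k ∈ Finset.range (n + 2),
                (C (L n ((k : ℤ) - 1)) + C ((r (k + 1) - s (n + 1)) * L n (k : ℤ))) * q k := by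
              rw [← Finset.sum_add_distrib]
              exact Finset.sum_congr rfl fun k _ => by ring
      calc (∑ k ∈ Finset.range (n + 2), C (a k) * q k)
          = (∑ k ∈ Finset.range (n + 2), C (L (n + 1) (k : ℤ)) * q k)
            - ∑ k ∈ Finset.range (n + 2),
                (C (L n ((k : ℤ) - 1)) + C ((r (k + 1) - s (n + 1)) * L n (k : ℤ))) * q k := by
            rw [← Finset.sum_sub_distrib]
            refine Finset.sum_congr rfl fun k _ => ?_
            simp only [ha, C_sub, C_add]
            ring
        _ = 0 := by rw [h1, h2, sub_self]
    have := lah_aux_indep r (n + 2) a key k hk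
    rw [ha] at this
    linear_combination this
  · -- degenerate case: everything vanishes
    have h1 : L (n + 1) (k : ℤ) = 0 := by apply hLzero; right; omega
    have h2 : L n ((k : ℤ) - 1) = 0 := by apply hLzero; right; omega
    have h3 : L n (k : ℤ) = 0 := by apply hLzero; right; omega
    rw [h1, h2, h3]; ring
end

section
/- Let R be a commutative ring, (r_j)_{j≥1} and (s_j)_{j≥1} sequences in R, q_n(x) = ∏_{j=1}^{n}(x − r_j), p_n(x) = ∏_{j=1}^{n}(x − s_j), and L_{n,k} ∈ R the connection coefficients with p_n = Σ_{k=0}^{n} L_{n,k} q_k. Define the cumulative connection constants C_n = Σ_{k=0}^{n} L_{n,k}. Then for all n ≥ 0: C_{n+1} = (1 − s_{n+1}) C_n + Σ_{k=0}^{n} L_{n,k} r_{k+1}. -/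
open Polynomial Finset


lemma myq_monic {R : Type*} [CommRing R] (r : ℕ → R) (k : ℕ) :
    (∏ j ∈ Finset.range k, (X - C (r (j+1)))).Monic :=
  monic_prod_of_monic _ _ fun j _ => monic_X_sub_C _

lemma myq_natDegree {R : Type*} [CommRing R] [Nontrivial R] (r : ℕ → R) (k : ℕ) :
    (∏ j ∈ Finset.range k, (X - C (r (j+1)))).natDegree = k := by
  rw [natDegree_prod_of_monic _ _ fun j _ => monic_X_sub_C _]
  simp [natDegree_X_sub_C]

lemma my_uniq {R : Type*} [CommRing R] (r : ℕ → R) :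
    ∀ (m : ℕ) (c : ℕ → R),
      (∑ k ∈ Finset.range (m+1), C (c k) * ∏ j ∈ Finset.range k, (X - C (r (j+1)))) = 0 →
      ∀ k, k ≤ m → c k = 0 := by
  intro m
  nontriviality R
  induction m with
  | zero =>
    intro c h k hk
    interval_cases k
    have : (C (c 0) : R[X]) = 0 := by simpa using h
    exact C_eq_zero.mp this
  | succ m ih =>
    intro c h k hk
    have htop : c (m+1) = 0 := by
      have h2 := congrArg (fun p => p.coeff (m+1)) h
      simp only [finset_sum_coeff, coeff_C_mul, coeff_zero] at h2
      rw [Finset.sum_range_succ] at h2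
      have hz : ∀ j ∈ Finset.range (m+1),
          c j * (∏ i ∈ Finset.range j, (X - C (r (i+1)))).coeff (m+1) = 0 := by
        intro j hj
        rw [coeff_eq_zero_of_natDegree_lt, mul_zero]
        rw [myq_natDegree]
        exact Finset.mem_range.mp hj
      rw [Finset.sum_eq_zero hz, zero_add] at h2
      have hc1 : (∏ i ∈ Finset.range (m+1), (X - C (r (i+1)))).coeff (m+1) = 1 := by
        have := (myq_monic r (m+1)).coeff_natDegree
        rwa [myq_natDegree] at this
      rwa [hc1, mul_one] at h2
    rcases Nat.lt_or_ge k (m+1) with hlt | hge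
    · apply ih c _ k (Nat.lt_succ_iff.mp hlt)
      rw [Finset.sum_range_succ, htop, C_0, zero_mul, add_zero] at h
      exact h
    · have : k = m + 1 := le_antisymm hk hge
      rw [this]; exact htop

/-- recurrence for the cumulative connection constants
`C_n = Σ_{k=0}^n L_{n,k}`:
`C_{n+1} = (1 - s_{n+1}) C_n + Σ_{k=0}^n L_{n,k} r_{k+1}`. -/
theorem ccc_recurrence (R : Type*) [CommRing R]
    (r s : ℕ → R) (L : ℕ → ℤ → R)
    (hLzero : ∀ (n : ℕ) (k : ℤ), (k < 0 ∨ (n : ℤ) < k) → L n k = 0)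
    (hLexp : ∀ n : ℕ,
      (∏ j ∈ Finset.range n, (X - C (s (j + 1)))) =
        ∑ k ∈ Finset.range (n + 1),
          C (L n (k : ℤ)) * ∏ j ∈ Finset.range k, (X - C (r (j + 1)))) :
    ∀ n : ℕ,
      ∑ k ∈ Finset.range (n + 2), L (n + 1) (k : ℤ) =
        (1 - s (n + 1)) * ∑ k ∈ Finset.range (n + 1), L n (k : ℤ)
          + ∑ k ∈ Finset.range (n + 1), L n (k : ℤ) * r (k + 1) := by
  intro n
  have hd : ∀ k, k ≤ n + 1 →
      (L (n+1) (k:ℤ) - L n ((k:ℤ)-1) - L n (k:ℤ) * (r (k+1) - s (n+1))) = 0 := by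
    apply my_uniq r (n+1)
    have hA := hLexp (n+1)
    have hB := hLexp n
    have hS2 : ∑ k ∈ Finset.range (n+2),
        C (L n ((k:ℤ)-1)) * ∏ j ∈ Finset.range k, (X - C (r (j+1))) =
        ∑ k ∈ Finset.range (n+1),
          C (L n (k:ℤ)) * ∏ j ∈ Finset.range (k+1), (X - C (r (j+1))) := by
      rw [Finset.sum_range_succ']
      have h0 : L n ((0:ℕ) - 1 : ℤ) = 0 := hLzero n _ (by left; norm_num)
      simp only [Nat.cast_zero] at h0 ⊢
      rw [show ((0:ℤ) - 1) = -1 by ring] at h0 ⊢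
      rw [h0]
      simp only [C_0, zero_mul, add_zero]
      apply Finset.sum_congr rfl
      intro i _
      congr 1
      push_cast
      ring_nf
    have hS3 : ∑ k ∈ Finset.range (n+2),
        C (L n (k:ℤ) * (r (k+1) - s (n+1))) * ∏ j ∈ Finset.range k, (X - C (r (j+1))) =
        ∑ k ∈ Finset.range (n+1),
          C (L n (k:ℤ) * (r (k+1) - s (n+1))) * ∏ j ∈ Finset.range k, (X - C (r (j+1))) := by
      rw [Finset.sum_range_succ]
      have htop : L n ((n+1 : ℕ) : ℤ) = 0 := hLzero n _ (by right; push_cast; omega)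
      rw [htop, zero_mul, C_0, zero_mul, add_zero]
    have hp : (∏ j ∈ Finset.range (n+1), (X - C (s (j+1)))) =
        ∑ k ∈ Finset.range (n+1),
          (C (L n (k:ℤ)) * ∏ j ∈ Finset.range (k+1), (X - C (r (j+1)))
            + C (L n (k:ℤ) * (r (k+1) - s (n+1))) * ∏ j ∈ Finset.range k, (X - C (r (j+1)))) := by
      rw [Finset.prod_range_succ, hB, Finset.sum_mul]
      apply Finset.sum_congr rfl
      intro k _
      rw [Finset.prod_range_succ]
      simp only [C_mul, C_sub]
      ring
    calc ∑ k ∈ Finset.range (n+2),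
          C (L (n+1) (k:ℤ) - L n ((k:ℤ)-1) - L n (k:ℤ) * (r (k+1) - s (n+1))) *
            ∏ j ∈ Finset.range k, (X - C (r (j+1)))
        = (∑ k ∈ Finset.range (n+2), C (L (n+1) (k:ℤ)) * ∏ j ∈ Finset.range k, (X - C (r (j+1))))
          - (∑ k ∈ Finset.range (n+2), C (L n ((k:ℤ)-1)) * ∏ j ∈ Finset.range k, (X - C (r (j+1))))
          - (∑ k ∈ Finset.range (n+2), C (L n (k:ℤ) * (r (k+1) - s (n+1))) * ∏ j ∈ Finset.range k, (X - C (r (j+1)))) := by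
          rw [← Finset.sum_sub_distrib, ← Finset.sum_sub_distrib]
          apply Finset.sum_congr rfl
          intro k _
          simp only [C_sub]
          ring
      _ = 0 := by
          rw [← hA, hS2, hS3, hp, ← Finset.sum_sub_distrib, ← Finset.sum_sub_distrib]
          apply Finset.sum_eq_zero
          intro k _
          ring
  have heq : ∀ k ∈ Finset.range (n+2),
      L (n+1) (k:ℤ) = L n ((k:ℤ)-1) + L n (k:ℤ) * (r (k+1) - s (n+1)) := by
    intro k hk
    have hk' : k ≤ n + 1 := by have := Finset.mem_range.mp hk; omega
    linear_combination hd k hk'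
  rw [Finset.sum_congr rfl heq, Finset.sum_add_distrib]
  have h1 : ∑ k ∈ Finset.range (n+2), L n ((k:ℤ)-1) = ∑ k ∈ Finset.range (n+1), L n (k:ℤ) := by
    rw [Finset.sum_range_succ']
    have h0 : L n (((0:ℕ):ℤ) - 1) = 0 := hLzero n _ (by left; norm_num)
    rw [h0, add_zero]
    apply Finset.sum_congr rfl
    intro i _
    congr 1
    push_cast
    ring
  have h2 : ∑ k ∈ Finset.range (n+2), L n (k:ℤ) * (r (k+1) - s (n+1)) =
      ∑ k ∈ Finset.range (n+1), L n (k:ℤ) * (r (k+1) - s (n+1)) := by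
    rw [Finset.sum_range_succ]
    have htop : L n ((n+1 : ℕ) : ℤ) = 0 := hLzero n _ (by right; push_cast; omega)
    rw [htop, zero_mul, add_zero]
  rw [h1, h2]
  have h3 : ∑ x ∈ Finset.range (n+1), s (n+1) * L n (x:ℤ) =
      ∑ x ∈ Finset.range (n+1), L n (x:ℤ) * s (n+1) :=
    Finset.sum_congr rfl fun x _ => mul_comm _ _
  simp only [mul_sub, sub_mul, one_mul, Finset.sum_sub_distrib, Finset.mul_sum, h3]
  ring
end

section
/- Define a sequence of integers (r_k)_{k≥1} by r_1 = 0, r_2 = 2, and r_k = 1 − (r_{k−1})^2 for k ≥ 3. Define integers L_{n,k} by L_{0,0} = 1, L_{n,k} = 0 for k < 0 or k > n, and L_{n+1,k} = L_{n,k−1} + r_{k+1} L_{n,k} for n, k ≥ 0. Then for every n ≥ 1, the cumulative connection constant C_n = Σ_{k=0}^{n} L_{n,k} equals the n-th Lucas number L_n. -/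
open Finset

/-- for the root sequence `r_1 = 0`, `r_2 = 2`,
`r_k = 1 - r_{k-1}^2` (k ≥ 3) and `[s] = [0]`, the cumulative connection
constants `C_n = Σ_{k=0}^n L_{n,k}` of the associated generalized Lah array
are the Lucas numbers. -/
theorem ccc_lucas
    (r : ℕ → ℤ) (hr1 : r 1 = 0) (hr2 : r 2 = 2)
    (hrrec : ∀ k : ℕ, 3 ≤ k → r k = 1 - (r (k - 1)) ^ 2)
    (L : ℕ → ℤ → ℤ) (hL00 : L 0 0 = 1)
    (hLzero : ∀ (n : ℕ) (k : ℤ), (k < 0 ∨ (n : ℤ) < k) → L n k = 0)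
    (hLrec : ∀ n k : ℕ,
      L (n + 1) (k : ℤ) = L n ((k : ℤ) - 1) + r (k + 1) * L n (k : ℤ))
    (Luc : ℕ → ℤ) (hLuc1 : Luc 1 = 1) (hLuc2 : Luc 2 = 3)
    (hLucrec : ∀ n : ℕ, 2 ≤ n → Luc (n + 1) = Luc n + Luc (n - 1)) :
    ∀ n : ℕ, 1 ≤ n → ∑ k ∈ Finset.range (n + 1), L n (k : ℤ) = Luc n := by
  -- L n 0 = 0 for n ≥ 1
  have hL0 : ∀ n : ℕ, L (n + 1) (0 : ℤ) = 0 := by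
    intro n
    have h := hLrec n 0
    simp only [Nat.cast_zero, zero_sub, zero_add] at h
    rw [h, hLzero n (-1) (Or.inl (by norm_num)), hr1]
    ring
  -- key1 : S (n+1) = S n + T n
  have key1 : ∀ n : ℕ, ∑ k ∈ range (n + 2), L (n + 1) (k : ℤ)
      = (∑ k ∈ range (n + 1), L n (k : ℤ))
        + (∑ k ∈ range (n + 1), r (k + 1) * L n (k : ℤ)) := by
    intro n
    have e1 : ∑ k ∈ range (n + 2), L (n + 1) (k : ℤ)
        = (∑ k ∈ range (n + 2), L n ((k : ℤ) - 1))
          + ∑ k ∈ range (n + 2), r (k + 1) * L n (k : ℤ) := by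
      rw [← Finset.sum_add_distrib]
      exact Finset.sum_congr rfl fun k _ => hLrec n k
    rw [e1]
    congr 1
    · rw [Finset.sum_range_succ' (fun k => L n ((k : ℤ) - 1)) (n + 1)]
      have : L n ((0 : ℕ) - 1 : ℤ) = 0 := by
        apply hLzero; left; norm_num
      rw [this, add_zero]
      apply Finset.sum_congr rfl
      intro k _
      push_cast
      ring_nf
    · rw [Finset.sum_range_succ]
      have : L n ((n + 1 : ℕ) : ℤ) = 0 := by
        apply hLzero; right; push_cast; linarith
      rw [this, mul_zero, add_zero]
  -- key2 : T (n+1) = S n + L n 0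
  have key2 : ∀ n : ℕ, ∑ k ∈ range (n + 2), r (k + 1) * L (n + 1) (k : ℤ)
      = (∑ k ∈ range (n + 1), L n (k : ℤ)) + L n 0 := by
    intro n
    have e1 : ∑ k ∈ range (n + 2), r (k + 1) * L (n + 1) (k : ℤ)
        = (∑ k ∈ range (n + 2), r (k + 1) * L n ((k : ℤ) - 1))
          + ∑ k ∈ range (n + 2), r (k + 1) ^ 2 * L n (k : ℤ) := by
      rw [← Finset.sum_add_distrib]
      apply Finset.sum_congr rfl
      intro k _
      rw [hLrec n k]; ring
    rw [e1]
    have e2 : ∑ k ∈ range (n + 2), r (k + 1) * L n ((k : ℤ) - 1)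
        = ∑ k ∈ range (n + 1), r (k + 2) * L n (k : ℤ) := by
      rw [Finset.sum_range_succ' (fun k => r (k + 1) * L n ((k : ℤ) - 1)) (n + 1)]
      have : L n ((0 : ℕ) - 1 : ℤ) = 0 := by apply hLzero; left; norm_num
      rw [this, mul_zero, add_zero]
      apply Finset.sum_congr rfl
      intro k _
      push_cast
      ring_nf
    have e3 : ∑ k ∈ range (n + 2), r (k + 1) ^ 2 * L n (k : ℤ)
        = ∑ k ∈ range (n + 1), r (k + 1) ^ 2 * L n (k : ℤ) := by
      rw [Finset.sum_range_succ]
      have : L n ((n + 1 : ℕ) : ℤ) = 0 := by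
        apply hLzero; right; push_cast; linarith
      rw [this, mul_zero, add_zero]
    rw [e2, e3, ← Finset.sum_add_distrib]
    have e4 : ∀ k ∈ range (n + 1),
        r (k + 2) * L n (k : ℤ) + r (k + 1) ^ 2 * L n (k : ℤ)
        = L n (k : ℤ) + (if k = 0 then L n 0 else 0) := by
      intro k _
      rcases Nat.eq_zero_or_pos k with hk | hk
      · subst hk
        simp only [if_pos]
        rw [hr2, hr1]
        push_cast; ring
      · rw [if_neg (Nat.pos_iff_ne_zero.mp hk)]
        have h3 : 3 ≤ k + 2 := by omega
        have hr := hrrec (k + 2) h3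
        have he : k + 2 - 1 = k + 1 := by omega
        rw [he] at hr
        rw [hr]
        ring
    rw [Finset.sum_congr rfl e4, Finset.sum_add_distrib]
    congr 1
    rw [Finset.sum_ite_eq' (range (n + 1)) 0 (fun _ => L n 0)]
    simp
  -- base values
  have hLn1 : L 1 (1 : ℤ) = 1 := by
    have h := hLrec 0 1
    push_cast at h
    rw [h, hL00, hLzero 0 1 (Or.inr (by norm_num))]
    ring
  have hS1 : ∑ k ∈ range 2, L 1 (k : ℤ) = 1 := by
    rw [Finset.sum_range_succ, Finset.sum_range_one]
    have h0 : L 1 (0 : ℤ) = 0 := hL0 0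
    push_cast
    rw [h0, hLn1]; ring
  have hS2 : ∑ k ∈ range 3, L 2 (k : ℤ) = 3 := by
    have := key1 1
    rw [hS1] at this
    rw [this]
    rw [Finset.sum_range_succ, Finset.sum_range_one]
    have h0 : L 1 (0 : ℤ) = 0 := hL0 0
    push_cast
    rw [h0, hLn1, hr1, hr2]; ring
  -- main two-step induction
  have main : ∀ n : ℕ, (∑ k ∈ range (n + 2), L (n + 1) (k : ℤ) = Luc (n + 1))
      ∧ (∑ k ∈ range (n + 3), L (n + 2) (k : ℤ) = Luc (n + 2)) := by
    intro n
    induction n with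
    | zero => exact ⟨by rw [hS1, hLuc1], by rw [hS2, hLuc2]⟩
    | succ m ih =>
      refine ⟨ih.2, ?_⟩
      have h1 := key1 (m + 2)
      have h2 := key2 (m + 1)
      rw [hL0 m, add_zero, ih.1] at h2
      rw [h2, ih.2] at h1
      have h3 := hLucrec (m + 2) (by omega)
      have he : m + 2 - 1 = m + 1 := by omega
      rw [he] at h3
      rw [h1, h3]
  intro n hn
  obtain ⟨m, rfl⟩ : ∃ m, n = m + 1 := ⟨n - 1, by omega⟩
  exact (main m).1
end

section
/- Let R be a commutative ring, q ∈ R, and let the Gaussian binomial coefficients binom(n,k)_q ∈ R be defined by binom(n,0)_q = 1, binom(0,k)_q = 0 for k > 0, and binom(n+1,k)_q = q^k · binom(n,k)_q + binom(n,k−1)_q. Then in the polynomial ring R[x], for every n ≥ 0: x^n = Σ_{k=0}^{n} binom(n,k)_q · Φ_k(x), where Φ_k(x) = ∏_{s=0}^{k−1}(x − q^s). -/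
open Polynomial Finset

/-- The Gaussian (q-)binomial coefficients in a commutative ring, defined by
`binom(n,0)_q = 1`, `binom(0,k)_q = 0` for `k > 0`, and
`binom(n+1,k)_q = q^k binom(n,k)_q + binom(n,k-1)_q`. -/
def gaussBinom {R : Type*} [CommRing R] (q : R) : ℕ → ℕ → R
  | _, 0 => 1
  | 0, _ + 1 => 0
  | n + 1, k + 1 => q ^ (k + 1) * gaussBinom q n (k + 1) + gaussBinom q n k

lemma gaussBinom_eq_zero {R : Type*} [CommRing R] (q : R) :
    ∀ n k : ℕ, n < k → gaussBinom q n k = 0 := by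
  intro n
  induction n with
  | zero =>
    intro k hk
    match k, hk with
    | k + 1, _ => rfl
  | succ n ih =>
    intro k hk
    match k, hk with
    | k + 1, hk =>
      have h1 : n < k + 1 := by omega
      have h2 : n < k := by omega
      show q ^ (k + 1) * gaussBinom q n (k + 1) + gaussBinom q n k = 0
      rw [ih _ h1, ih _ h2]
      ring

/-- `x^n = Σ_{k=0}^n binom(n,k)_q Φ_k(x)` where
`Φ_k(x) = ∏_{s=0}^{k-1}(x - q^s)` are the q-Gaussian polynomials. -/
theorem qGaussian_expansion (R : Type*) [CommRing R] (q : R) :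
    ∀ n : ℕ,
      (X : R[X]) ^ n =
        ∑ k ∈ Finset.range (n + 1),
          C (gaussBinom q n k) * ∏ s ∈ Finset.range k, (X - C (q ^ s)) := by
  intro n
  induction n with
  | zero => simp [gaussBinom]
  | succ n ih =>
    have hx : (X : R[X]) ^ (n + 1) = X * X ^ n := by ring
    rw [hx, ih, Finset.mul_sum]
    have key : ∀ k : ℕ, (X : R[X]) *
        (C (gaussBinom q n k) * ∏ s ∈ Finset.range k, (X - C (q ^ s)))
        = C (gaussBinom q n k) * ∏ s ∈ Finset.range (k + 1), (X - C (q ^ s))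
          + C (q ^ k * gaussBinom q n k) * ∏ s ∈ Finset.range k, (X - C (q ^ s)) := by
      intro k
      rw [Finset.prod_range_succ]
      push_cast [map_mul]
      ring
    rw [Finset.sum_congr rfl fun k _ => key k, Finset.sum_add_distrib]
    -- RHS manipulation
    rw [Finset.sum_range_succ' (fun k => C (gaussBinom q (n + 1) k) *
        ∏ s ∈ Finset.range k, (X - C (q ^ s)))]
    have hb : ∀ k : ℕ, gaussBinom q (n + 1) (k + 1)
        = q ^ (k + 1) * gaussBinom q n (k + 1) + gaussBinom q n k := fun k => rfl
    simp only [hb, map_add, add_mul, gaussBinom]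
    rw [Finset.sum_add_distrib]
    -- second sum on left: split off top term which vanishes
    rw [Finset.sum_range_succ' (fun k => C (q ^ k * gaussBinom q n k) *
        ∏ s ∈ Finset.range k, (X - C (q ^ s)))]
    rw [Finset.sum_range_succ (fun k => C (q ^ (k + 1) * gaussBinom q n (k + 1)) *
        ∏ s ∈ Finset.range (k + 1), (X - C (q ^ s)))]
    rw [gaussBinom_eq_zero q n (n + 1) (by omega)]
    have h0 : gaussBinom q n 0 = (1 : R) := by cases n <;> rfl
    simp only [map_mul, h0, map_zero, map_one, map_pow, pow_zero]
    ring
end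

section
/- Let R be a commutative ring and q ∈ R. Define H_k(x) = Σ_{l=0}^{k} binom(k,l)_q · x^l in R[x]. Then for every n ≥ 0: x^n = Σ_{k=0}^{n} binom(n,k)_q · (−1)^{n−k} · q^{C(n−k,2)} · H_k(x), where C(m,2) = m(m−1)/2. -/
open Polynomial Finset

section Aux

variable {R : Type*} [CommRing R]

lemma gb_zero_right (q : R) (n : ℕ) : gaussBinom q n 0 = 1 := by cases n <;> rfl

lemma gb_succ_succ (q : R) (n k : ℕ) :
    gaussBinom q (n + 1) (k + 1) = q ^ (k + 1) * gaussBinom q n (k + 1) + gaussBinom q n k := rfl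

lemma gb_eq_zero (q : R) : ∀ n k, n < k → gaussBinom q n k = 0 := by
  intro n
  induction n with
  | zero =>
    intro k hk
    match k, hk with
    | k + 1, _ => rfl
  | succ n ih =>
    intro k hk
    match k, hk with
    | k + 1, hk =>
      rw [gb_succ_succ, ih (k + 1) (by omega), ih k (by omega)]
      ring

lemma gb_key (q : R) {n k : ℕ} (h : k ≤ n) :
    q ^ k * ((-1 : R) ^ (n + 1 - k) * q ^ ((n + 1 - k).choose 2)) =
      -q ^ n * ((-1 : R) ^ (n - k) * q ^ ((n - k).choose 2)) := by
  obtain ⟨m, rfl⟩ : ∃ m, n = k + m := ⟨n - k, by omega⟩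
  have h1 : k + m + 1 - k = m + 1 := by omega
  have h2 : k + m - k = m := by omega
  have h3 : (m + 1).choose 2 = m.choose 2 + m := by
    rw [Nat.choose_succ_succ]
    simp [Nat.choose_one_right, Nat.add_comm]
  rw [h1, h2, h3, pow_add, pow_add, pow_succ]
  ring

lemma gb_A (q : R) (n l : ℕ) :
    (∑ k ∈ range (n + 2),
        q ^ k * gaussBinom q n k * ((-1 : R) ^ (n + 1 - k) * q ^ ((n + 1 - k).choose 2)) *
          gaussBinom q k l) =
      -q ^ n *
        ∑ k ∈ range (n + 1),
          gaussBinom q n k * (-1 : R) ^ (n - k) * q ^ ((n - k).choose 2) * gaussBinom q k l := by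
  rw [Finset.sum_range_succ, gb_eq_zero q n (n + 1) (lt_add_one n), Finset.mul_sum]
  simp only [mul_zero, zero_mul, add_zero]
  refine Finset.sum_congr rfl fun k hk => ?_
  have hk' : k ≤ n := by simp only [mem_range] at hk; omega
  have h := gb_key q hk'
  linear_combination (gaussBinom q n k * gaussBinom q k l) * h

lemma gb_B (q : R) (n l : ℕ) :
    (∑ k ∈ range (n + 2),
        (if k = 0 then 0 else
          gaussBinom q n (k - 1) * ((-1 : R) ^ (n + 1 - k) * q ^ ((n + 1 - k).choose 2)) *
            gaussBinom q k l)) =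
      ∑ i ∈ range (n + 1),
        gaussBinom q n i * ((-1 : R) ^ (n - i) * q ^ ((n - i).choose 2)) *
          gaussBinom q (i + 1) l := by
  rw [Finset.sum_range_succ']
  simp [Nat.succ_sub_succ]

lemma gb_S (q : R) (n : ℕ) :
    ∀ l, (∑ k ∈ range (n + 1),
        gaussBinom q n k * (-1 : R) ^ (n - k) * q ^ ((n - k).choose 2) * gaussBinom q k l) =
      if n = l then 1 else 0 := by
  induction n with
  | zero =>
    intro l
    cases l <;> simp [gaussBinom]
  | succ n ih =>
    intro l
    have hsum : (∑ k ∈ range (n + 2),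
        gaussBinom q (n + 1) k * (-1 : R) ^ (n + 1 - k) * q ^ ((n + 1 - k).choose 2) *
          gaussBinom q k l) =
        (∑ k ∈ range (n + 2),
          q ^ k * gaussBinom q n k * ((-1 : R) ^ (n + 1 - k) * q ^ ((n + 1 - k).choose 2)) *
            gaussBinom q k l) +
        ∑ k ∈ range (n + 2),
          (if k = 0 then 0 else
            gaussBinom q n (k - 1) * ((-1 : R) ^ (n + 1 - k) * q ^ ((n + 1 - k).choose 2)) *
              gaussBinom q k l) := by
      rw [← Finset.sum_add_distrib]
      refine Finset.sum_congr rfl fun k _ => ?_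
      cases k with
      | zero =>
        simp only [gb_zero_right, if_pos rfl, if_true, eq_self_iff_true, add_zero, pow_zero, Nat.sub_zero]
        ring
      | succ j =>
        rw [gb_succ_succ]
        simp only [Nat.succ_ne_zero, if_false, Nat.succ_sub_one, Nat.add_sub_cancel]
        ring
    rw [hsum, gb_A, gb_B, ih l]
    cases l with
    | zero =>
      have hB : (∑ i ∈ range (n + 1),
          gaussBinom q n i * ((-1 : R) ^ (n - i) * q ^ ((n - i).choose 2)) *
            gaussBinom q (i + 1) 0) =
          ∑ i ∈ range (n + 1),
            gaussBinom q n i * (-1 : R) ^ (n - i) * q ^ ((n - i).choose 2) * gaussBinom q i 0 := by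
        refine Finset.sum_congr rfl fun i _ => ?_
        rw [gb_zero_right, gb_zero_right]
        ring
      rw [hB, ih 0]
      split_ifs <;> simp_all
    | succ m =>
      have hB : (∑ i ∈ range (n + 1),
          gaussBinom q n i * ((-1 : R) ^ (n - i) * q ^ ((n - i).choose 2)) *
            gaussBinom q (i + 1) (m + 1)) =
          q ^ (m + 1) *
            (∑ i ∈ range (n + 1),
              gaussBinom q n i * (-1 : R) ^ (n - i) * q ^ ((n - i).choose 2) *
                gaussBinom q i (m + 1)) +
          ∑ i ∈ range (n + 1),
            gaussBinom q n i * (-1 : R) ^ (n - i) * q ^ ((n - i).choose 2) * gaussBinom q i m := by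
        rw [Finset.mul_sum, ← Finset.sum_add_distrib]
        refine Finset.sum_congr rfl fun i _ => ?_
        rw [gb_succ_succ]
        ring
      rw [hB, ih (m + 1), ih m]
      split_ifs <;> (try omega) <;> subst_vars <;> ring

end Aux

/-- with `H_k(x) = Σ_{l=0}^k binom(k,l)_q x^l`, one has
`x^n = Σ_{k=0}^n binom(n,k)_q (-1)^{n-k} q^{C(n-k,2)} H_k(x)`. -/
theorem q_moebius_inverse_expansion (R : Type*) [CommRing R] (q : R) :
    ∀ n : ℕ,
      (X : R[X]) ^ n =
        ∑ k ∈ Finset.range (n + 1),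
          C (gaussBinom q n k * (-1) ^ (n - k) * q ^ ((n - k).choose 2)) *
            ∑ l ∈ Finset.range (k + 1), C (gaussBinom q k l) * X ^ l := by
  intro n
  symm
  have hext : ∀ k ∈ range (n + 1),
      C (gaussBinom q n k * (-1 : R) ^ (n - k) * q ^ ((n - k).choose 2)) *
        (∑ l ∈ range (k + 1), C (gaussBinom q k l) * X ^ l) =
      C (gaussBinom q n k * (-1 : R) ^ (n - k) * q ^ ((n - k).choose 2)) *
        ∑ l ∈ range (n + 1), C (gaussBinom q k l) * X ^ l := by
    intro k hk
    congr 1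
    refine Finset.sum_subset (Finset.range_subset_range.2 ?_) fun l _ hl => ?_
    · simp only [mem_range] at hk; omega
    · simp only [mem_range, not_lt] at hl
      rw [gb_eq_zero q k l (by omega)]
      simp
  rw [Finset.sum_congr rfl hext]
  simp only [Finset.mul_sum]
  rw [Finset.sum_comm]
  have hinner : ∀ l ∈ range (n + 1),
      (∑ k ∈ range (n + 1),
        C (gaussBinom q n k * (-1 : R) ^ (n - k) * q ^ ((n - k).choose 2)) *
          (C (gaussBinom q k l) * X ^ l)) =
      C (if n = l then (1 : R) else 0) * X ^ l := by
    intro l _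
    have : (∑ k ∈ range (n + 1),
        C (gaussBinom q n k * (-1 : R) ^ (n - k) * q ^ ((n - k).choose 2)) *
          (C (gaussBinom q k l) * X ^ l)) =
        C (∑ k ∈ range (n + 1),
          gaussBinom q n k * (-1 : R) ^ (n - k) * q ^ ((n - k).choose 2) * gaussBinom q k l) *
          X ^ l := by
      rw [map_sum, Finset.sum_mul]
      refine Finset.sum_congr rfl fun k _ => ?_
      simp only [C_mul, mul_assoc]
    rw [this, gb_S]
  rw [Finset.sum_congr rfl hinner]
  rw [Finset.sum_eq_single n]
  · simp
  · intro b _ hb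
    rw [if_neg (fun h => hb h.symm)]
    simp
  · intro h
    simp at h
end

section
/- Let F_n denote the n-th Fibonacci number (F_0 = 0, F_1 = F_2 = 1) and define the F-factorial n_F! = F_1 · F_2 · ⋯ · F_n with 0_F! = 1. Then for all 0 ≤ k ≤ n, the product k_F! · (n−k)_F! divides n_F!, so the Fibonomial coefficient binom(n,k)_F = n_F!/(k_F! · (n−k)_F!) is a natural number. -/
open Finset

/-- The F-factorial `n_F! = F_1 F_2 ⋯ F_n` (Fibonacci factorial), `0_F! = 1`. -/
def fibFac (n : ℕ) : ℕ := ∏ i ∈ Finset.range n, Nat.fib (i + 1)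

lemma fibFac_succ (n : ℕ) : fibFac (n + 1) = fibFac n * Nat.fib (n + 1) := by
  simp [fibFac, Finset.prod_range_succ]

/-- `k_F! (n-k)_F!` divides `n_F!`, so the Fibonomial coefficient
`binom(n,k)_F = n_F!/(k_F!(n-k)_F!)` is a natural number. -/
theorem fibFac_mul_fibFac_dvd :
    ∀ n k : ℕ, k ≤ n → fibFac k * fibFac (n - k) ∣ fibFac n := by
  intro n
  induction n with
  | zero =>
    intro k hk
    interval_cases k
    simp [fibFac]
  | succ n ih =>
    intro k hk
    match k with
    | 0 => simp [fibFac]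
    | k + 1 =>
      have hk' : k ≤ n := Nat.succ_le_succ_iff.mp hk
      have hsub : n + 1 - (k + 1) = n - k := by omega
      rw [hsub]
      have hfib : Nat.fib (n + 1)
          = Nat.fib k * Nat.fib (n - k) + Nat.fib (k + 1) * Nat.fib (n - k + 1) := by
        have h := Nat.fib_add k (n - k)
        rw [show k + (n - k) + 1 = n + 1 by omega] at h
        exact h
      rw [fibFac_succ n, hfib, Nat.mul_add]
      apply dvd_add
      · rcases Nat.lt_or_ge k n with h | h
        · obtain ⟨c, hc⟩ := ih (k + 1) h
          have hnk : fibFac (n - k) = fibFac (n - (k + 1)) * Nat.fib (n - k) := by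
            rw [show n - k = (n - (k + 1)) + 1 by omega, fibFac_succ,
              show n - (k + 1) + 1 = n - k by omega]
          exact ⟨c * Nat.fib k, by rw [hc, hnk]; ring⟩
        · have : n - k = 0 := by omega
          simp [this]
      · obtain ⟨c, hc⟩ := ih k hk'
        exact ⟨c * Nat.fib (n - k + 1), by rw [hc, fibFac_succ k]; ring⟩
end

section
/- Let F be any sequence of positive natural numbers indexed by n ≥ 1 (an F-cobweb admissible sequence, so that all F-nomial coefficients binom(n,k)_F = n_F!/(k_F!(n−k)_F!) are natural numbers). Let 0 ≤ k ≤ n and m = n − k. Then the set C_max⟨Φ_{k+1} → Φ_n⟩ of all maximal chains of the layer ⟨Φ_{k+1} → Φ_n⟩ (i.e. all tuples ⟨x_{k+1}, …, x_n⟩ with x_s ∈ Φ_s) admits a partition into exactly binom(n,k)_F mutually disjoint blocks, each of cardinality m_F! = F_1 · F_2 · ⋯ · F_m (i.e. each equipotent to C_max(P_m)). -/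
open Finset

/-- The F-factorial `n_F! = F_1 F_2 ⋯ F_n`, `0_F! = 1`. -/
def ffac (F : ℕ → ℕ) (n : ℕ) : ℕ := ∏ i ∈ Finset.range n, F (i + 1)

/-- The F-nomial coefficient `binom(n,k)_F = n_F!/(k_F!(n-k)_F!)`. -/
def fnomial (F : ℕ → ℕ) (n k : ℕ) : ℕ :=
  ffac F n / (ffac F k * ffac F (n - k))

/-- The chains of the layer are equivalent to a product of `Fin`s. -/
def chainEquiv (F : ℕ → ℕ) (k m : ℕ) :
    {c : Fin m → ℕ × ℕ // ∀ s : Fin m,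
        (c s).2 = k + 1 + s.1 ∧ 1 ≤ (c s).1 ∧ (c s).1 ≤ F (k + 1 + s.1)} ≃
    ((s : Fin m) → Fin (F (k + 1 + s.1))) where
  toFun c s := ⟨(c.1 s).1 - 1, by have := c.2 s; omega⟩
  invFun f := ⟨fun s => ((f s).1 + 1, k + 1 + s.1), fun s =>
    ⟨rfl, Nat.le_add_left 1 _, (f s).isLt⟩⟩
  left_inv c := by
    apply Subtype.ext; funext s
    have h := c.2 s
    have h1 : (c.1 s).1 - 1 + 1 = (c.1 s).1 := by omega
    show ((c.1 s).1 - 1 + 1, k + 1 + s.1) = c.1 s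
    rw [h1, ← h.1]
  right_inv f := by funext s; apply Fin.ext; simp

/-- Kwaśniewski's theorem: for an F-cobweb admissible sequence
`F`, the set of all maximal chains of the layer `⟨Φ_{k+1} → Φ_n⟩` of the
F-cobweb poset (tuples `⟨x_{k+1},…,x_n⟩` with `x_s ∈ Φ_s`) admits a partition
into exactly `binom(n,k)_F` mutually disjoint blocks, each of cardinality
`m_F! = F_1 F_2 ⋯ F_m` where `m = n - k` (i.e. each equipotent to
`C_max(P_m)`). -/
theorem layer_maximal_chains_partition
    (F : ℕ → ℕ) (hF : ∀ n : ℕ, 1 ≤ n → 1 ≤ F n)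
    (hadm : ∀ n k : ℕ, k ≤ n → ffac F k * ffac F (n - k) ∣ ffac F n)
    (n k m : ℕ) (hk : k ≤ n) (hm : m = n - k) :
    ∃ B : Fin (fnomial F n k) →
        Set {c : Fin m → ℕ × ℕ // ∀ s : Fin m,
          (c s).2 = k + 1 + s.1 ∧ 1 ≤ (c s).1 ∧ (c s).1 ≤ F (k + 1 + s.1)},
      (∀ i j, i ≠ j → Disjoint (B i) (B j)) ∧
      (⋃ i, B i) = Set.univ ∧
      (∀ i, Nat.card (B i) = ffac F m) := by
  set a := fnomial F n k with ha
  set b := ffac F m with hb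
  -- arithmetic: ∏_{s<m} F (k+1+s) = a * b
  have hkpos : 0 < ffac F k := by
    apply Finset.prod_pos
    intro i _; exact hF (i + 1) (Nat.le_add_left 1 i)
  have hsplit : ffac F k * ∏ i ∈ Finset.range m, F (k + 1 + i) = ffac F n := by
    have : ffac F n = ffac F (k + m) := by rw [hm]; congr 1; omega
    rw [this]
    simp only [ffac]
    rw [Finset.prod_range_add]
    congr 1
    apply Finset.prod_congr rfl; intro i _; congr 1; omega
  have hab : a * (ffac F k * b) = ffac F n := by
    rw [ha, fnomial, ← hm, hb]
    exact Nat.div_mul_cancel (hm ▸ hadm n k hk)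
  have hprod : (∏ s : Fin m, F (k + 1 + s.1)) = a * b := by
    rw [Fin.prod_univ_eq_prod_range (fun i => F (k + 1 + i)) m]
    have : ffac F k * (a * b) = ffac F k * ∏ i ∈ Finset.range m, F (k + 1 + i) := by
      rw [hsplit, ← hab]; ring
    exact (Nat.eq_of_mul_eq_mul_left hkpos this).symm
  -- equivalence to Fin a × Fin b
  let T := {c : Fin m → ℕ × ℕ // ∀ s : Fin m,
      (c s).2 = k + 1 + s.1 ∧ 1 ≤ (c s).1 ∧ (c s).1 ≤ F (k + 1 + s.1)}
  haveI : Fintype T := Fintype.ofEquiv _ (chainEquiv F k m).symm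
  have hcard : Fintype.card T = a * b := by
    rw [Fintype.card_congr (chainEquiv F k m), Fintype.card_pi]
    simpa using hprod
  have e : T ≃ Fin a × Fin b := by
    apply Fintype.equivOfCardEq
    rw [hcard]; simp
  refine ⟨fun i => {x | (e x).1 = i}, ?_, ?_, ?_⟩
  · intro i j hij
    rw [Set.disjoint_left]
    intro x hx hx'
    exact hij (hx ▸ hx')
  · ext x
    simp only [Set.mem_iUnion, Set.mem_univ, iff_true]
    exact ⟨(e x).1, rfl⟩
  · intro i
    have eb : {x : T | (e x).1 = i} ≃ Fin b :=
      { toFun := fun x => (e x.1).2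
        invFun := fun y => ⟨e.symm (i, y), by simp⟩
        left_inv := by
          rintro ⟨x, hx⟩
          apply Subtype.ext
          simp only
          have : ((i, (e x).2) : Fin a × Fin b) = e x := Prod.ext hx.symm rfl
          rw [this, Equiv.symm_apply_apply]
        right_inv := by intro y; simp }
    rw [Nat.card_congr eb, Nat.card_eq_fintype_card, Fintype.card_fin]
end

section
/- Let F be a sequence of positive natural numbers and consider the F-cobweb poset, which is a locally finite partial order. Its Möbius function μ satisfies, for x = ⟨s,t⟩ and y = ⟨u,v⟩ with x ≤ y: μ(x,y) = 1 if x = y, and μ(x,y) = (−1)^{v−t} · ∏_{i=t+1}^{v−1}(F_i − 1) if t < v. -/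
open Finset

/-- The elements of the F-cobweb poset: pairs `⟨s,t⟩` with `t ≥ 1` and
`1 ≤ s ≤ F_t`. -/
def CobwebEl (F : ℕ → ℕ) : Type :=
  {p : ℕ × ℕ // 1 ≤ p.2 ∧ 1 ≤ p.1 ∧ p.1 ≤ F p.2}

/-- The F-cobweb partial order: `⟨s,t⟩ ≤ ⟨u,v⟩` iff `⟨s,t⟩ = ⟨u,v⟩` or `t < v`. -/
instance (F : ℕ → ℕ) : PartialOrder (CobwebEl F) where
  le x y := x = y ∨ x.1.2 < y.1.2
  le_refl x := Or.inl rfl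
  le_trans x y z hxy hyz := by
    rcases hxy with rfl | h
    · exact hyz
    · rcases hyz with rfl | h' 
      · exact Or.inr h
      · exact Or.inr (h.trans h')
  le_antisymm x y hxy hyx := by
    rcases hxy with rfl | h
    · rfl
    · rcases hyx with rfl | h'
      · rfl
      · exact absurd (h.trans h') (lt_irrefl _)

theorem CobwebEl.le_def {F : ℕ → ℕ} {x y : CobwebEl F} :
    x ≤ y ↔ x = y ∨ x.1.2 < y.1.2 := Iff.rfl

/-- the Möbius function of the F-cobweb poset (characterized by
`μ(x,x) = 1` and `Σ_{x ≤ z ≤ y} μ(x,z) = 0` for `x < y`) satisfies, for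
`x = ⟨s,t⟩ ≤ y = ⟨u,v⟩`: `μ(x,y) = 1` if `x = y`, and
`μ(x,y) = (-1)^{v-t} ∏_{i=t+1}^{v-1} (F_i - 1)` if `t < v`. -/
theorem cobweb_moebius_formula
    (F : ℕ → ℕ) (hF : ∀ n : ℕ, 1 ≤ n → 1 ≤ F n)
    (μ : CobwebEl F → CobwebEl F → ℤ)
    (hμ₁ : ∀ x : CobwebEl F, μ x x = 1)
    (hμ₂ : ∀ x y : CobwebEl F, x < y → ∑ᶠ z ∈ Set.Icc x y, μ x z = 0) :
    ∀ x y : CobwebEl F, x ≤ y →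
      (x = y → μ x y = 1) ∧
      (x.1.2 < y.1.2 →
        μ x y = (-1) ^ (y.1.2 - x.1.2) *
          ∏ i ∈ Finset.Ico (x.1.2 + 1) y.1.2, ((F i : ℤ) - 1)) := by
  intro x y hxy
  set t := x.1.2 with ht
  set g : ℕ → ℤ := fun v => (-1) ^ (v - t) * ∏ i ∈ Finset.Ico (t + 1) v, ((F i : ℤ) - 1)
    with hg
  -- recurrence satisfied by the target formula
  have grec : ∀ v, t + 1 ≤ v →
      g v = -(1 + ∑ w ∈ Finset.Ico (t + 1) v, (F w : ℤ) * g w) := by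
    intro v hv
    induction v, hv using Nat.le_induction with
    | base =>
      have h1 : t + 1 - t = 1 := by omega
      simp [hg, h1]
    | succ v hv ih =>
      have hsum : ∑ w ∈ Finset.Ico (t + 1) (v + 1), (F w : ℤ) * g w
          = (∑ w ∈ Finset.Ico (t + 1) v, (F w : ℤ) * g w) + (F v : ℤ) * g v :=
        Finset.sum_Ico_succ_top hv _
      have hpow : v + 1 - t = (v - t) + 1 := by omega
      have hgs : g (v + 1) = (1 - (F v : ℤ)) * g v := by
        simp only [hg, hpow, pow_succ, Finset.prod_Ico_succ_top hv]
        ring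
      rw [hsum, hgs, ih]
      ring
  -- the main induction: μ x y = g v for any y at level v > t
  have key : ∀ v, ∀ y : CobwebEl F, y.1.2 = v → t < v → μ x y = g v := by
    intro v
    induction v using Nat.strong_induction_on with
    | _ v ih =>
      intro y hyv htv
      have hxley : x ≤ y := Or.inr (by rw [hyv]; exact htv)
      have hxlty : x < y := by
        refine lt_of_le_of_ne hxley ?_
        intro h
        rw [h, hyv] at ht
        omega
      have hsum0 := hμ₂ x y hxlty
      -- level sets
      set L : ℕ → Set (CobwebEl F) := fun w => {z | z.1.2 = w} with hL
      have hLfin : ∀ w, 1 ≤ w → (L w).Finite := by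
        intro w hw
        have : L w ⊆ (fun s : ℕ =>
            if h : 1 ≤ s ∧ s ≤ F w then (⟨(s, w), hw, h.1, h.2⟩ : CobwebEl F) else x) ''
              Set.Icc 1 (F w) := by
          intro z hz
          have hc : 1 ≤ z.1.1 ∧ z.1.1 ≤ F w := ⟨z.2.2.1, hz ▸ z.2.2.2⟩
          refine ⟨z.1.1, ⟨hc.1, hc.2⟩, ?_⟩
          beta_reduce; erw [dif_pos hc]
          exact Subtype.ext (Prod.ext rfl (show z.1.2 = w from hz).symm)
        exact Set.Finite.subset ((Set.finite_Icc _ _).image _) this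
      have hIcc : Set.Icc x y =
          ({x} : Set (CobwebEl F)) ∪
            ((⋃ w ∈ (↑(Finset.Ico (t + 1) v) : Set ℕ), L w) ∪ {y}) := by
        ext z
        simp only [Set.mem_Icc, Set.mem_union, Set.mem_singleton_iff, Set.mem_iUnion,
          Finset.coe_Ico, Set.mem_Ico, hL, Set.mem_setOf_eq, exists_prop]
        constructor
        · rintro ⟨hxz, hzy⟩
          rcases CobwebEl.le_def.1 hxz with rfl | h1
          · exact Or.inl rfl
          · rcases CobwebEl.le_def.1 hzy with rfl | h2
            · exact Or.inr (Or.inr rfl)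
            · exact Or.inr (Or.inl ⟨z.1.2, ⟨h1, by omega⟩, rfl⟩)
        · rintro (rfl | ⟨w, ⟨hw1, hw2⟩, hzw⟩ | rfl)
          · exact ⟨le_refl _, hxley⟩
          · exact ⟨Or.inr (by omega), Or.inr (by omega)⟩
          · exact ⟨hxley, le_refl _⟩
      have hdisjL : (↑(Finset.Ico (t + 1) v) : Set ℕ).PairwiseDisjoint L := by
        intro a _ b _ hab
        simp only [Function.onFun, Set.disjoint_left, hL, Set.mem_setOf_eq]
        intro z hza hzb
        exact hab (hza ▸ hzb ▸ rfl)
      have hLfin' : ∀ w ∈ (↑(Finset.Ico (t + 1) v) : Set ℕ), (L w).Finite := by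
        intro w hw
        simp only [Finset.coe_Ico, Set.mem_Ico] at hw
        exact hLfin w (by have := x.2.1; omega)
      have hmidfin : (⋃ w ∈ (↑(Finset.Ico (t + 1) v) : Set ℕ), L w).Finite :=
        Set.Finite.biUnion (Finset.finite_toSet _) hLfin'
      have hd1 : Disjoint ({x} : Set (CobwebEl F))
          ((⋃ w ∈ (↑(Finset.Ico (t + 1) v) : Set ℕ), L w) ∪ {y}) := by
        simp only [Set.disjoint_left, Set.mem_singleton_iff, Set.mem_union, Set.mem_iUnion,
          Finset.coe_Ico, Set.mem_Ico, hL, Set.mem_setOf_eq, exists_prop]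
        rintro z rfl
        push_neg
        constructor
        · intro w ⟨hw1, _⟩ h
          omega
        · intro h
          rw [h, hyv] at ht
          omega
      have hd2 : Disjoint (⋃ w ∈ (↑(Finset.Ico (t + 1) v) : Set ℕ), L w)
          ({y} : Set (CobwebEl F)) := by
        simp only [Set.disjoint_left, Set.mem_iUnion, Finset.coe_Ico, Set.mem_Ico, hL,
          Set.mem_setOf_eq, Set.mem_singleton_iff, exists_prop]
        rintro z ⟨w, ⟨_, hw2⟩, hzw⟩ rfl
        omega
      rw [hIcc, finsum_mem_union hd1 (Set.finite_singleton _)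
          (hmidfin.union (Set.finite_singleton _)),
        finsum_mem_union hd2 hmidfin (Set.finite_singleton _),
        finsum_mem_singleton, finsum_mem_singleton, hμ₁,
        finsum_mem_biUnion hdisjL (Finset.finite_toSet _) hLfin'] at hsum0
      -- compute each level sum
      have hlevel : ∀ w ∈ (↑(Finset.Ico (t + 1) v) : Set ℕ),
          ∑ᶠ z ∈ L w, μ x z = (F w : ℤ) * g w := by
        intro w hw
        simp only [Finset.coe_Ico, Set.mem_Ico] at hw
        have hw1 : 1 ≤ w := by have := x.2.1; omega
        set f : ℕ → CobwebEl F := fun s =>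
          if h : 1 ≤ s ∧ s ≤ F w then (⟨(s, w), hw1, h.1, h.2⟩ : CobwebEl F) else x with hf
        have himg : L w = f '' Set.Icc 1 (F w) := by
          ext z
          simp only [hL, Set.mem_setOf_eq, Set.mem_image, Set.mem_Icc]
          constructor
          · intro hz
            have hc : 1 ≤ z.1.1 ∧ z.1.1 ≤ F w := ⟨z.2.2.1, hz ▸ z.2.2.2⟩
            refine ⟨z.1.1, ⟨hc.1, hc.2⟩, ?_⟩
            simp only [hf]; erw [dif_pos hc]
            exact Subtype.ext (Prod.ext rfl hz.symm)
          · rintro ⟨s, hs, rfl⟩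
            rw [hf]
            simp only
            erw [dif_pos hs]
        have hinj : Set.InjOn f (Set.Icc 1 (F w)) := by
          intro a ha b hb hab
          simp only [Set.mem_Icc] at ha hb
          rw [hf] at hab
          beta_reduce at hab; erw [dif_pos ha, dif_pos hb] at hab
          exact (Prod.ext_iff.1 (Subtype.ext_iff.1 hab)).1
        rw [himg, finsum_mem_image hinj, ← Finset.coe_Icc, finsum_mem_coe_finset]
        have hval : ∀ s ∈ Finset.Icc 1 (F w), μ x (f s) = g w := by
          intro s hs
          simp only [Finset.mem_Icc] at hs
          have hfs : (f s).1.2 = w := by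
            rw [hf]; simp only; erw [dif_pos hs]
          exact ih w hw.2 (f s) hfs (by omega)
        rw [Finset.sum_congr rfl hval, Finset.sum_const, Nat.card_Icc]
        simp [nsmul_eq_mul]
      rw [finsum_mem_congr rfl hlevel, finsum_mem_coe_finset] at hsum0
      have := grec v htv
      linarith [hsum0, this]
  constructor
  · rintro rfl
    exact hμ₁ x
  · intro h
    exact key y.1.2 y rfl h
end
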